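/- Let (X, ρ) be a metric space and let μ be a finite discrete measure, i.e., a finite positive linear combination of Dirac point masses μ = Σ_{i=1}^{n} c_i δ_{x_i} with c_i > 0 and n ≥ 1. Then every locally μ-integrable fixed point of the uncentered maximal operator is constant on supp μ; that is, if f satisfies M_μ f(x) = f(x) for every x ∈ supp μ, then f is constant on supp μ = {x_1, …, x_n}. -/

import Mathlib

open MeasureTheory Metric Filter Topology

variable {X : Type*}

/-- The average of `|f|` over the closed ball of center `c` and radius `r`. -/
noncomputable def ballAvg [MetricSpace X] [MeasurableSpace X]
    (μ : Measure X) (f : X → ℝ) (c : X) (r : ℝ) : ℝ :=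
  (μ (closedBall c r)).toReal⁻¹ * ∫ y in closedBall c r, |f y| ∂μ

/-- The uncentered Hardy–Littlewood maximal function: the supremum of the averages of `|f|`
over all closed balls of positive measure containing `x`. -/
noncomputable def maximalU [MetricSpace X] [MeasurableSpace X]
    (μ : Measure X) (f : X → ℝ) (x : X) : ℝ :=
  sSup {a : ℝ | ∃ c : X, ∃ r : ℝ, x ∈ closedBall c r ∧ 0 < μ (closedBall c r) ∧
    a = ballAvg μ f c r}

/-- The centered Hardy–Littlewood maximal function: the supremum of the averages of `|f|`
over all closed balls of positive measure centered at `x`. -/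
noncomputable def maximalC [MetricSpace X] [MeasurableSpace X]
    (μ : Measure X) (f : X → ℝ) (x : X) : ℝ :=
  sSup {a : ℝ | ∃ r : ℝ, 0 < r ∧ 0 < μ (closedBall x r) ∧ a = ballAvg μ f x r}

/-- The support of a measure: points all of whose neighborhoods have positive measure. -/
def msupport [MetricSpace X] [MeasurableSpace X] (μ : Measure X) : Set X :=
  {x : X | ∀ r : ℝ, 0 < r → 0 < μ (ball x r)}

section Aux
variable [MetricSpace X] [MeasurableSpace X] [BorelSpace X]

open Classical in
lemma discrete_meas_apply {n : ℕ} (x : Fin n → X) (c : Fin n → ℝ) (s : Set X) :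
    (∑ i : Fin n, ENNReal.ofReal (c i) • Measure.dirac (x i)) s
      = ∑ i : Fin n, if x i ∈ s then ENNReal.ofReal (c i) else 0 := by
  rw [Measure.finset_sum_apply]
  refine Finset.sum_congr rfl fun i _ => ?_
  simp [Measure.dirac_apply, Set.indicator]

lemma restrict_fsum {n : ℕ} (ν : Fin n → Measure X) (s : Set X) :
    (∑ i : Fin n, ν i).restrict s = ∑ i : Fin n, (ν i).restrict s := by
  ext u hu
  simp [Measure.restrict_apply hu, Measure.finset_sum_apply]

lemma integrable_scaled_dirac (g : X → ℝ) (a : X) (k : ENNReal) (hk : k ≠ ⊤) (s : Set X) :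
    Integrable g ((k • Measure.dirac a).restrict s) := by
  rw [Measure.restrict_smul]
  refine Integrable.smul_measure ?_ hk
  classical
  rw [restrict_dirac]
  split_ifs
  · exact (integrable_congr (ae_eq_dirac g)).2 (integrable_const _)
  · exact integrable_zero_measure

open Classical in
lemma discrete_setIntegral {n : ℕ} (x : Fin n → X) (c : Fin n → ℝ) (hc : ∀ i, 0 ≤ c i)
    (g : X → ℝ) (s : Set X) :
    ∫ y in s, g y ∂(∑ i : Fin n, ENNReal.ofReal (c i) • Measure.dirac (x i))
      = ∑ i : Fin n, if x i ∈ s then c i * g (x i) else 0 := by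
  rw [restrict_fsum, integral_finset_sum_measure
    (fun i _ => integrable_scaled_dirac g (x i) _ ENNReal.ofReal_ne_top s)]
  refine Finset.sum_congr rfl fun i _ => ?_
  rw [Measure.restrict_smul, integral_smul_measure, setIntegral_dirac g (x i) s,
    ENNReal.toReal_ofReal (hc i)]
  split_ifs <;> simp [mul_comm]

end Aux

/-- For a finite discrete measure `μ = Σ_{i=1}^n c_i δ_{x_i}` with `c_i > 0`, every locally
integrable fixed point of the uncentered maximal operator is constant on the support of `μ`. -/
theorem fixed_points_constant_of_discrete_measure
    [MetricSpace X] [MeasurableSpace X] [BorelSpace X]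
    (μ : Measure X)
    (n : ℕ) (hn : 1 ≤ n) (x : Fin n → X) (c : Fin n → ℝ) (hc : ∀ i, 0 < c i)
    (hμ : μ = ∑ i : Fin n, ENNReal.ofReal (c i) • Measure.dirac (x i))
    (f : X → ℝ) (hf : LocallyIntegrable f μ)
    (hfix : ∀ z ∈ msupport μ, maximalU μ f z = f z) :
    ∀ z ∈ msupport μ, ∀ w ∈ msupport μ, f z = f w := by
  classical
  haveI : Nonempty (Fin n) := ⟨⟨0, hn⟩⟩
  have hune : (Finset.univ : Finset (Fin n)).Nonempty := Finset.univ_nonempty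
  -- basic formulas
  have hμs : ∀ s : Set X, μ s = ∑ i : Fin n, if x i ∈ s then ENNReal.ofReal (c i) else 0 := by
    intro s; rw [hμ]; exact discrete_meas_apply x c s
  have htoReal : ∀ s : Set X, (μ s).toReal = ∑ i : Fin n, if x i ∈ s then c i else 0 := by
    intro s
    rw [hμs s, ENNReal.toReal_sum (fun i _ => by split_ifs <;> simp)]
    refine Finset.sum_congr rfl fun i _ => ?_
    split_ifs <;> simp [ENNReal.toReal_ofReal (hc i).le]
  have hint : ∀ s : Set X,
      ∫ y in s, |f y| ∂μ = ∑ i : Fin n, if x i ∈ s then c i * |f (x i)| else 0 := by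
    intro s; rw [hμ]; exact discrete_setIntegral x c (fun i => (hc i).le) _ s
  have hex : ∀ s : Set X, 0 < μ s → ∃ i, x i ∈ s := by
    intro s hs
    by_contra h
    push_neg at h
    rw [hμs s] at hs
    simp [h] at hs
  have hmempos : ∀ (s : Set X) (j : Fin n), x j ∈ s → 0 < μ s := by
    intro s j hj
    rw [hμs s]
    calc (0 : ENNReal) < ENNReal.ofReal (c j) := by simp [hc j]
      _ = if x j ∈ s then ENNReal.ofReal (c j) else 0 := by rw [if_pos hj]
      _ ≤ _ := Finset.single_le_sum (f := fun i => if x i ∈ s then ENNReal.ofReal (c i) else 0)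
          (fun i _ => zero_le) (Finset.mem_univ j)
  -- support facts
  have hmem : ∀ j, x j ∈ msupport μ := by
    intro j r hr
    exact hmempos _ j (mem_ball_self hr)
  have hsupp : ∀ z ∈ msupport μ, ∃ j, x j = z := by
    intro z hz
    by_contra h
    push_neg at h
    have hr : 0 < Finset.univ.inf' hune fun i => dist z (x i) := by
      rw [Finset.lt_inf'_iff]
      exact fun i _ => dist_pos.2 fun e => h i e.symm
    have := hz _ hr
    obtain ⟨i, hi⟩ := hex _ this
    rw [mem_ball] at hi
    exact absurd hi (not_lt.2 (by rw [dist_comm]; exact Finset.inf'_le _ (Finset.mem_univ i)))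
  -- boundedness of the set of averages
  set S : ℝ := ∑ i : Fin n, c i * |f (x i)| with hS
  have hSnn : 0 ≤ S := Finset.sum_nonneg fun i _ => mul_nonneg (hc i).le (abs_nonneg _)
  set cmin : ℝ := Finset.univ.inf' hune c with hcmin
  have hcmin0 : 0 < cmin := by rw [hcmin, Finset.lt_inf'_iff]; exact fun i _ => hc i
  have hbdd : ∀ z : X, BddAbove {a : ℝ | ∃ c0 : X, ∃ r : ℝ, z ∈ closedBall c0 r ∧
      0 < μ (closedBall c0 r) ∧ a = ballAvg μ f c0 r} := by
    intro z
    refine ⟨cmin⁻¹ * S, ?_⟩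
    rintro a ⟨c0, r, -, hpos, rfl⟩
    set B := closedBall c0 r
    have h1 : ∫ y in B, |f y| ∂μ ≤ S := by
      rw [hint B, hS]
      refine Finset.sum_le_sum fun i _ => ?_
      split_ifs
      · exact le_rfl
      · exact mul_nonneg (hc i).le (abs_nonneg _)
    have h2 : (0:ℝ) ≤ ∫ y in B, |f y| ∂μ := by
      rw [hint B]
      refine Finset.sum_nonneg fun i _ => ?_
      split_ifs
      exacts [mul_nonneg (hc i).le (abs_nonneg _), le_rfl]
    have h3 : cmin ≤ (μ B).toReal := by
      obtain ⟨i, hi⟩ := hex B hpos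
      rw [htoReal B]
      calc cmin ≤ c i := Finset.inf'_le _ (Finset.mem_univ i)
        _ = if x i ∈ B then c i else 0 := by rw [if_pos hi]
        _ ≤ _ := Finset.single_le_sum (f := fun j => if x j ∈ B then c j else 0)
            (fun j _ => by split_ifs; exacts [(hc j).le, le_rfl]) (Finset.mem_univ i)
    have h4 : (μ B).toReal⁻¹ ≤ cmin⁻¹ := by
      exact inv_anti₀ hcmin0 h3
    exact mul_le_mul h4 h1 h2 (by positivity)
  -- f = |f| on the support
  have habs : ∀ j, f (x j) = |f (x j)| := by
    intro j
    set r : ℝ := Finset.univ.inf' hune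
      (fun i => if x i = x j then 1 else dist (x j) (x i) / 2) with hrdef
    have hr0 : 0 < r := by
      rw [hrdef, Finset.lt_inf'_iff]
      intro i _
      split_ifs with h
      · norm_num
      · have := dist_pos.2 fun e => h e.symm
        linarith
    set B := closedBall (x j) r with hB
    have hBeq : ∀ i, (x i ∈ B) ↔ x i = x j := by
      intro i
      constructor
      · intro hi
        by_contra h
        have h1 : r ≤ dist (x j) (x i) / 2 := by
          have := Finset.inf'_le (b := i)
            (fun i => if x i = x j then 1 else dist (x j) (x i) / 2) (Finset.mem_univ i)
          rwa [if_neg h] at this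
        have h2 : dist (x i) (x j) ≤ r := mem_closedBall.1 hi
        have h3 : 0 < dist (x j) (x i) := dist_pos.2 fun e => h e.symm
        rw [dist_comm] at h2
        linarith
      · intro h; rw [mem_closedBall, h, dist_self]; exact hr0.le
    set t : ℝ := ∑ i : Fin n, if x i = x j then c i else 0 with ht
    have ht0 : 0 < t := by
      rw [ht]
      calc (0:ℝ) < c j := hc j
        _ = if x j = x j then c j else 0 := by rw [if_pos rfl]
        _ ≤ _ := Finset.single_le_sum (f := fun i => if x i = x j then c i else 0)
            (fun i _ => by split_ifs; exacts [(hc i).le, le_rfl]) (Finset.mem_univ j)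
    have hμB : (μ B).toReal = t := by
      rw [htoReal B, ht]
      exact Finset.sum_congr rfl fun i _ => if_congr (hBeq i) rfl rfl
    have hμBpos : 0 < μ B := hmempos B j (by rw [hBeq j])
    have hintB : ∫ y in B, |f y| ∂μ = t * |f (x j)| := by
      rw [hint B, ht, Finset.sum_mul]
      refine Finset.sum_congr rfl fun i _ => ?_
      by_cases h : x i = x j
      · rw [if_pos ((hBeq i).2 h), if_pos h, h]
      · rw [if_neg (fun hh => h ((hBeq i).1 hh)), if_neg h, zero_mul]
    have havg : ballAvg μ f (x j) r = |f (x j)| := by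
      rw [ballAvg, ← hB, hμB, hintB, ← mul_assoc, inv_mul_cancel₀ ht0.ne', one_mul]
    have hle : |f (x j)| ≤ maximalU μ f (x j) := by
      apply le_csSup (hbdd (x j))
      exact ⟨x j, r, mem_closedBall_self hr0.le, hμBpos, havg.symm⟩
    rw [hfix (x j) (hmem j)] at hle
    exact le_antisymm (le_abs_self _) hle
  -- the big ball bound
  set T : ℝ := ∑ i : Fin n, c i with hT
  have hT0 : 0 < T := Finset.sum_pos (fun i _ => hc i) hune
  have hbig : ∀ j, T⁻¹ * (∑ i : Fin n, c i * f (x i)) ≤ f (x j) := by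
    intro j
    set z0 := x ⟨0, hn⟩
    set R : ℝ := Finset.univ.sup' hune (fun i => dist (x i) z0) with hR
    set B := closedBall z0 R with hB
    have hmemB : ∀ i, x i ∈ B := fun i =>
      mem_closedBall.2 (Finset.le_sup' (fun i => dist (x i) z0) (Finset.mem_univ i))
    have hμB : (μ B).toReal = T := by
      rw [htoReal B, hT]
      exact Finset.sum_congr rfl fun i _ => if_pos (hmemB i)
    have hμBpos : 0 < μ B := hmempos B j (hmemB j)
    have hintB : ∫ y in B, |f y| ∂μ = ∑ i : Fin n, c i * f (x i) := by
      rw [hint B]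
      exact Finset.sum_congr rfl fun i _ => by rw [if_pos (hmemB i), ← habs i]
    have havg : ballAvg μ f z0 R = T⁻¹ * (∑ i : Fin n, c i * f (x i)) := by
      rw [ballAvg, ← hB, hμB, hintB]
    have hle : T⁻¹ * (∑ i : Fin n, c i * f (x i)) ≤ maximalU μ f (x j) := by
      apply le_csSup (hbdd (x j))
      exact ⟨z0, R, hmemB j, hμBpos, havg.symm⟩
    rwa [hfix (x j) (hmem j)] at hle
  -- conclude: all values equal the min
  obtain ⟨j0, -, hj0⟩ := Finset.exists_min_image Finset.univ (fun i => f (x i)) hune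
  set m : ℝ := f (x j0) with hm
  have hsum_le : ∑ i : Fin n, c i * f (x i) ≤ T * m := by
    have := hbig j0
    rw [← hm] at this
    calc ∑ i : Fin n, c i * f (x i) = T * (T⁻¹ * (∑ i : Fin n, c i * f (x i))) := by
          rw [← mul_assoc, mul_inv_cancel₀ hT0.ne', one_mul]
      _ ≤ T * m := by apply mul_le_mul_of_nonneg_left this hT0.le
  have hsum_ge : ∑ i : Fin n, c i * m ≤ ∑ i : Fin n, c i * f (x i) :=
    Finset.sum_le_sum fun i _ => mul_le_mul_of_nonneg_left (hj0 i (Finset.mem_univ i)) (hc i).le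
  have heq : ∑ i : Fin n, c i * m = ∑ i : Fin n, c i * f (x i) := by
    apply le_antisymm hsum_ge
    calc ∑ i : Fin n, c i * f (x i) ≤ T * m := hsum_le
      _ = ∑ i : Fin n, c i * m := by rw [hT, Finset.sum_mul]
  have hall : ∀ i, f (x i) = m := by
    intro i
    have := (Finset.sum_eq_sum_iff_of_le
      (fun i _ => mul_le_mul_of_nonneg_left (hj0 i (Finset.mem_univ i)) (hc i).le)).1 heq
    have h2 := this i (Finset.mem_univ i)
    exact (mul_left_cancel₀ (hc i).ne' h2).symm
  intro z hz w hw
  obtain ⟨jz, hjz⟩ := hsupp z hz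
  obtain ⟨jw, hjw⟩ := hsupp w hw
  rw [← hjz, ← hjw, hall jz, hall jw]
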